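/- Deterministic core of the consistency transfer, integer lattice case: Let F : ℝ → [0, 1] be the cumulative distribution function of a probability distribution supported on ℤ (so F is constant on each interval [k, k+1), k ∈ ℤ), and let M(y) = ∫_{−∞}^y F(t) dt, which is finite for all y. Let M̃ : ℝ → ℝ satisfy sup_{y ∈ ℝ} |M̃(y) − M(y)| ≤ c for some c > 0, let M̂ be the greatest convex minorant of M̃, and define F̂(y) = M̂(⌊y⌋ + 1) − M̂(⌊y⌋) for y ∈ ℝ. Then sup_{y ∈ ℝ} |F̂(y) − F(y)| ≤ 2c. -/

import Mathlib

open MeasureTheory Filter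

/-- `g` is the greatest convex minorant of `f` on the set `I`. -/
def IsGCM (I : Set ℝ) (f g : ℝ → ℝ) : Prop :=
  ConvexOn ℝ I g ∧ (∀ x ∈ I, g x ≤ f x) ∧
    ∀ g' : ℝ → ℝ, ConvexOn ℝ I g' → (∀ x ∈ I, g' x ≤ f x) → ∀ x ∈ I, g' x ≤ g x

/-- Deterministic core of the consistency transfer, integer lattice case: let `F` be the CDF of a
probability distribution supported on `ℤ` (so `F y = F ⌊y⌋` for all `y`) and
`M y = ∫_{-∞}^y F`, finite for all `y`. If `M̃` is uniformly within `c` of `M`, `M̂` is the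
greatest convex minorant of `M̃`, and `F̂ y = M̂ (⌊y⌋ + 1) - M̂ ⌊y⌋`, then
`sup_y |F̂ y - F y| ≤ 2c`. -/
theorem consistency_transfer_integer_lattice
    (F M Mt Mh : ℝ → ℝ) (c : ℝ) (hc : 0 < c)
    (hF_mono : Monotone F)
    (hF_range : ∀ y, F y ∈ Set.Icc (0 : ℝ) 1)
    (hF_bot : Tendsto F atBot (nhds 0))
    (hF_top : Tendsto F atTop (nhds 1))
    (hF_lattice : ∀ y : ℝ, F y = F (⌊y⌋ : ℝ))
    (hM_int : ∀ y : ℝ, IntegrableOn F (Set.Iic y))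
    (hM : ∀ y : ℝ, M y = ∫ t in Set.Iic y, F t)
    (hMt : ∀ y, |Mt y - M y| ≤ c)
    (hGCM : IsGCM Set.univ Mt Mh) :
    ∀ y : ℝ, |(Mh ((⌊y⌋ : ℝ) + 1) - Mh (⌊y⌋ : ℝ)) - F y| ≤ 2 * c := by
  have hint : ∀ x y : ℝ, IntervalIntegrable F volume x y := fun x y =>
    ⟨(hM_int y).mono_set Set.Ioc_subset_Iic_self,
     (hM_int x).mono_set Set.Ioc_subset_Iic_self⟩
  -- difference of M as an interval integral
  have hdiff : ∀ x y : ℝ, M y - M x = ∫ t in x..y, F t := by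
    intro x y
    rw [hM, hM]
    exact intervalIntegral.integral_Iic_sub_Iic (hM_int x) (hM_int y)
  -- upper and lower bounds on increments
  have hupper : ∀ x y : ℝ, x ≤ y → M y - M x ≤ F y * (y - x) := by
    intro x y hxy
    rw [hdiff]
    calc ∫ t in x..y, F t ≤ ∫ t in x..y, F y :=
          intervalIntegral.integral_mono_on hxy (hint x y) intervalIntegrable_const
            (fun t ht => hF_mono ht.2)
      _ = F y * (y - x) := by rw [intervalIntegral.integral_const, smul_eq_mul, mul_comm]
  have hlower : ∀ x y : ℝ, x ≤ y → F x * (y - x) ≤ M y - M x := by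
    intro x y hxy
    rw [hdiff]
    calc F x * (y - x) = ∫ t in x..y, F x := by
          rw [intervalIntegral.integral_const, smul_eq_mul, mul_comm]
      _ ≤ ∫ t in x..y, F t :=
          intervalIntegral.integral_mono_on hxy intervalIntegrable_const (hint x y)
            (fun t ht => hF_mono ht.1)
  -- M is convex
  have hMconv : ConvexOn ℝ Set.univ M := by
    apply convexOn_of_slope_mono_adjacent convex_univ
    intro x y z _ _ hxy hyz
    have h1 : M y - M x ≤ F y * (y - x) := hupper x y hxy.le
    have h2 : F y * (z - y) ≤ M z - M y := hlower y z hyz.le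
    have hxy' : 0 < y - x := by linarith
    have hyz' : 0 < z - y := by linarith
    calc (M y - M x) / (y - x) ≤ F y := by
          rw [div_le_iff₀ hxy']; linarith
      _ ≤ (M z - M y) / (z - y) := by
          rw [le_div_iff₀ hyz']; linarith
  -- sandwich: |Mh t - M t| ≤ c
  have hsand : ∀ t : ℝ, |Mh t - M t| ≤ c := by
    intro t
    rw [abs_le]
    constructor
    · have hconv' : ConvexOn ℝ Set.univ (fun x => M x - c) := by
        exact hMconv.sub (concaveOn_const c convex_univ)
      have hle : ∀ x ∈ Set.univ, M x - c ≤ Mt x := fun x _ => by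
        have := (abs_le.mp (hMt x)).1; linarith
      have := hGCM.2.2 _ hconv' hle t (Set.mem_univ t)
      linarith
    · have h1 := hGCM.2.1 t (Set.mem_univ t)
      have h2 := (abs_le.mp (hMt t)).2
      linarith
  -- M (k+1) - M k = F k
  intro y
  set k : ℝ := (⌊y⌋ : ℝ) with hk
  have hMk : M (k + 1) - M k = F k := by
    rw [hdiff, intervalIntegral.integral_of_le (by linarith : k ≤ k + 1)]
    have hres : volume.restrict (Set.Ioc k (k + 1)) = volume.restrict (Set.Ioo k (k + 1)) :=
      (Measure.restrict_congr_set Ioo_ae_eq_Ioc).symm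
    have hae : ∀ᵐ t ∂(volume.restrict (Set.Ioc k (k + 1))), F t = F k := by
      rw [hres]
      refine (ae_restrict_iff' measurableSet_Ioo).2 (Filter.Eventually.of_forall ?_)
      intro t ht
      rw [hF_lattice t]
      congr 2
      rw [Int.floor_eq_iff]
      · constructor
        · push_cast [hk]; exact ht.1.le
        · push_cast [hk]; exact ht.2
    rw [integral_congr_ae hae]
    simp
  -- conclude
  have ha := abs_le.mp (hsand k)
  have hb := abs_le.mp (hsand (k + 1))
  have hFy : F y = F k := hF_lattice y
  rw [abs_le]
  constructor <;> [skip; skip] <;> (rw [hFy]; nlinarith [hMk, ha.1, ha.2, hb.1, hb.2])
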